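/- Let K be a field of characteristic zero and n, k positive integers. On the polynomial algebra P = MvPolynomial (Fin n × Fin k) K, for each i ∈ Fin n, a ∈ Fin k let x_{ia} denote the K-linear endomorphism given by multiplication by the variable x_{ia}, and ∂_{ia} the partial derivative pderiv (i,a); set R_{ij} = Σ_{a ∈ Fin k} x_{ia} ∘ ∂_{ja} and L_{ab} = Σ_{l ∈ Fin n} x_{la} ∘ ∂_{lb}. Then for all i, j ∈ Fin n and all a, b ∈ Fin k, the endomorphisms R_{ij} and L_{ab} commute: R_{ij} ∘ L_{ab} = L_{ab} ∘ R_{ij}. -/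

import Mathlib

open MvPolynomial

variable (K : Type*) [Field K] (n k : ℕ)

/-- Multiplication by the variable `x_{ia}` as a `K`-linear endomorphism of
`P = K[x_{ia}]`. -/
noncomputable def xOp (v : Fin n × Fin k) :
    MvPolynomial (Fin n × Fin k) K →ₗ[K] MvPolynomial (Fin n × Fin k) K :=
  LinearMap.mulLeft K (X v)

/-- The partial derivative `∂_{ia}` as a `K`-linear endomorphism of `P = K[x_{ia}]`. -/
noncomputable def dOp (v : Fin n × Fin k) :
    MvPolynomial (Fin n × Fin k) K →ₗ[K] MvPolynomial (Fin n × Fin k) K :=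
  (pderiv v).toLinearMap

/-- `R_{ij} = Σ_a x_{ia} ∘ ∂_{ja}`, the oscillator image of the generator `E_{ij}` of
`gl_n`. -/
noncomputable def ROp (i j : Fin n) :
    MvPolynomial (Fin n × Fin k) K →ₗ[K] MvPolynomial (Fin n × Fin k) K :=
  ∑ a : Fin k, xOp K n k (i, a) ∘ₗ dOp K n k (j, a)

/-- `L_{ab} = Σ_l x_{la} ∘ ∂_{lb}`, the oscillator image of the generator `E'_{ab}` of
`gl_k`. -/
noncomputable def LOp (a b : Fin k) :
    MvPolynomial (Fin n × Fin k) K →ₗ[K] MvPolynomial (Fin n × Fin k) K :=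
  ∑ l : Fin n, xOp K n k (l, a) ∘ₗ dOp K n k (l, b)

/-- Partial derivatives commute. -/
lemma pderiv_comm_aux {σ R : Type*} [CommRing R] (u v : σ) (p : MvPolynomial σ R) :
    pderiv u (pderiv v p) = pderiv v (pderiv u p) := by
  classical
  induction p using MvPolynomial.induction_on' with
  | monomial s c =>
    simp only [pderiv_monomial]
    rcases eq_or_ne u v with rfl | h
    · rfl
    · rw [tsub_right_comm]
      congr 1
      simp [Finsupp.sub_apply, Finsupp.single_apply, if_neg h, if_neg (Ne.symm h)]
      ring
  | add p q hp hq => simp [hp, hq]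

lemma xx_comm (v w : Fin n × Fin k) :
    xOp K n k v * xOp K n k w = xOp K n k w * xOp K n k v := by
  refine LinearMap.ext fun p => ?_
  simp only [xOp, Module.End.mul_apply, LinearMap.mulLeft_apply]
  ring

lemma dd_comm (v w : Fin n × Fin k) :
    dOp K n k v * dOp K n k w = dOp K n k w * dOp K n k v := by
  refine LinearMap.ext fun p => ?_
  exact pderiv_comm_aux v w p

lemma dx_rel (v w : Fin n × Fin k) :
    dOp K n k v * xOp K n k w
      = xOp K n k w * dOp K n k v + if w = v then 1 else 0 := by
  refine LinearMap.ext fun p => ?_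
  rcases eq_or_ne w v with rfl | h
  · simp [dOp, xOp, Module.End.mul_apply, pderiv_mul, pderiv_X_self, add_comm]
  · simp [dOp, xOp, Module.End.mul_apply, pderiv_mul, pderiv_X_of_ne h, h]

/-- The oscillator realizations of `gl_n` and `gl_k` on polynomials on
`n × k` matrices commute: `R_{ij} ∘ L_{ab} = L_{ab} ∘ R_{ij}`. -/
theorem oscillator_dual_pair_commutes [CharZero K] (hn : 0 < n) (hk : 0 < k)
    (i j : Fin n) (a b : Fin k) :
    ROp K n k i j ∘ₗ LOp K n k a b = LOp K n k a b ∘ₗ ROp K n k i j := by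
  classical
  have expandL : ∀ (c : Fin k) (l : Fin n),
      (xOp K n k (i,c) * dOp K n k (j,c)) * (xOp K n k (l,a) * dOp K n k (l,b))
        = (xOp K n k (i,c) * xOp K n k (l,a)) * (dOp K n k (j,c) * dOp K n k (l,b))
          + if (l,a) = ((j : Fin n), c) then xOp K n k (i,c) * dOp K n k (l,b) else 0 := by
    intro c l
    have h := dx_rel K n k (j,c) (l,a)
    calc (xOp K n k (i,c) * dOp K n k (j,c)) * (xOp K n k (l,a) * dOp K n k (l,b))
        = xOp K n k (i,c) * (dOp K n k (j,c) * xOp K n k (l,a)) * dOp K n k (l,b) := by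
          noncomm_ring
      _ = xOp K n k (i,c) * (xOp K n k (l,a) * dOp K n k (j,c)
            + if (l,a) = ((j : Fin n), c) then 1 else 0) * dOp K n k (l,b) := by rw [h]
      _ = _ := by split_ifs <;> noncomm_ring
  have expandR : ∀ (l : Fin n) (c : Fin k),
      (xOp K n k (l,a) * dOp K n k (l,b)) * (xOp K n k (i,c) * dOp K n k (j,c))
        = (xOp K n k (l,a) * xOp K n k (i,c)) * (dOp K n k (l,b) * dOp K n k (j,c))
          + if (i,c) = ((l : Fin n), b) then xOp K n k (l,a) * dOp K n k (j,c) else 0 := by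
    intro l c
    have h := dx_rel K n k (l,b) (i,c)
    calc (xOp K n k (l,a) * dOp K n k (l,b)) * (xOp K n k (i,c) * dOp K n k (j,c))
        = xOp K n k (l,a) * (dOp K n k (l,b) * xOp K n k (i,c)) * dOp K n k (j,c) := by
          noncomm_ring
      _ = xOp K n k (l,a) * (xOp K n k (i,c) * dOp K n k (l,b)
            + if (i,c) = ((l : Fin n), b) then 1 else 0) * dOp K n k (j,c) := by rw [h]
      _ = _ := by split_ifs <;> noncomm_ring
  show ROp K n k i j * LOp K n k a b = LOp K n k a b * ROp K n k i j
  simp only [ROp, LOp, ← Module.End.mul_eq_comp, Finset.sum_mul, Finset.mul_sum]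
  rw [Finset.sum_congr rfl fun l _ => Finset.sum_congr rfl fun c _ => expandL c l,
      Finset.sum_congr rfl fun c _ => Finset.sum_congr rfl fun l _ => expandR l c]
  simp only [Finset.sum_add_distrib]
  congr 1
  · rw [Finset.sum_comm]
    refine Finset.sum_congr rfl fun c _ => Finset.sum_congr rfl fun l _ => ?_
    rw [xx_comm, dd_comm]
  · simp [Prod.mk.injEq, ite_and, Finset.sum_ite_eq, Finset.sum_ite_eq']
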